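/- Let (X,d) be a finite ultrametric space with |X| ≥ 3. Then |Sp(X)| = |X| if and only if there exists a cyclic enumeration x₁,...,xₙ of all points of X such that among the n cyclic consecutive distances d(x₁,x₂),...,d(x_{n−1},xₙ), d(xₙ,x₁), exactly two attain the maximum value, and the remaining n−2 distances are strictly positive and pairwise distinct. -/

import Mathlib

namespace CharHam
variable {X : Type*} (d : X → X → ℝ)

def E (l : List X) : List ℝ := (l.zip l.tail).map fun p => d p.1 p.2

@[simp] lemma E_nil : E d [] = [] := rfl
@[simp] lemma E_single (x : X) : E d [x] = [] := rfl
@[simp] lemma E_cons (x y : X) (t : List X) :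
    E d (x :: y :: t) = d x y :: E d (y :: t) := rfl

lemma E_length (l : List X) : (E d l).length = l.tail.length := by
  simp [E, List.length_zip]

def fmax (l : List ℝ) : ℝ := l.foldr max 0

@[simp] lemma fmax_nil : fmax [] = 0 := rfl
@[simp] lemma fmax_cons (a : ℝ) (l : List ℝ) : fmax (a :: l) = max a (fmax l) := rfl

lemma le_fmax {r : ℝ} {l : List ℝ} (h : r ∈ l) : r ≤ fmax l := by
  induction l with
  | nil => simp at h
  | cons a t ih =>
    rcases List.mem_cons.1 h with rfl | h
    · simp
    · exact le_trans (ih h) (le_max_right _ _)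

lemma fmax_le {l : List ℝ} {M : ℝ} (h : ∀ r ∈ l, r ≤ M) (h0 : 0 ≤ M) : fmax l ≤ M := by
  induction l with
  | nil => simpa
  | cons a t ih =>
    simp only [fmax_cons, max_le_iff]
    exact ⟨h a (by simp), ih fun r hr => h r (by simp [hr])⟩

lemma fmax_mem {l : List ℝ} (hne : l ≠ []) (h0 : ∀ r ∈ l, 0 ≤ r) : fmax l ∈ l := by
  induction l with
  | nil => simp at hne
  | cons a t ih =>
    rcases eq_or_ne t [] with rfl | ht
    · simp [fmax, max_eq_left (h0 a (by simp))]
    · have hm := ih ht (fun r hr => h0 r (by simp [hr]))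
      rcases le_total a (fmax t) with h | h
      · simp [max_eq_right h, hm]
      · simp [max_eq_left h]

variable (hnonneg : ∀ x y, 0 ≤ d x y)
    (hsymm : ∀ x y, d x y = d y x)
    (hzero : ∀ x y, d x y = 0 ↔ x = y)
    (hultra : ∀ x y z, d x y ≤ max (d x z) (d z y))

include hnonneg in
lemma E_nonneg (l : List X) : ∀ r ∈ E d l, 0 ≤ r := by
  intro r hr
  simp only [E, List.mem_map] at hr
  obtain ⟨p, _, rfl⟩ := hr
  exact hnonneg _ _

include hnonneg hultra in
lemma dist_le_fmax : ∀ (m : List X) (x z : X), d x z ≤ fmax (E d (x :: m ++ [z]))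
  | [], x, z => by simpa using le_max_of_le_left (le_refl (d x z))
  | y :: m', x, z => by
    have h1 := dist_le_fmax m' y z
    calc d x z ≤ max (d x y) (d y z) := hultra x z y
    _ ≤ max (d x y) (fmax (E d (y :: m' ++ [z]))) := max_le_max (le_refl _) h1
    _ = fmax (E d (x :: y :: m' ++ [z])) := by simp

include hnonneg hsymm hultra in
lemma dist_eq_fmax : ∀ (m : List X) (x z : X),
    (E d (x :: m ++ [z])).count (fmax (E d (x :: m ++ [z]))) = 1 →
    d x z = fmax (E d (x :: m ++ [z]))
  | [], x, z, _ => by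
    simpa using (max_eq_left (hnonneg x z)).symm
  | y :: m', x, z, hcount => by
    set L := E d (y :: m' ++ [z]) with hL
    have hLne : L ≠ [] := by
      have : L.length = m'.length + 1 := by
        simp [hL, E_length]
      intro h; rw [h] at this; simp at this
    have hLmem : fmax L ∈ L := fmax_mem hLne (fun r hr => E_nonneg d hnonneg _ r hr)
    have hfull : E d (x :: y :: m' ++ [z]) = d x y :: L := by simp [hL]
    rw [hfull] at hcount ⊢
    rcases lt_trichotomy (d x y) (fmax L) with hlt | heq | hgt
    · -- fmax full = fmax L
      have hfm : max (d x y) (fmax L) = fmax L := max_eq_right hlt.le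
      rw [fmax_cons, hfm] at hcount ⊢
      rw [List.count_cons_of_ne (ne_of_lt hlt)] at hcount
      have hIH := dist_eq_fmax m' y z (by rw [← hL]; exact hcount)
      rw [← hL] at hIH
      have hle : d x z ≤ fmax L := by
        have h := dist_le_fmax d hnonneg hultra (y :: m') x z
        rw [show x :: (y :: m') ++ [z] = x :: y :: m' ++ [z] from rfl, hfull, fmax_cons, hfm] at h
        exact h
      have hge : fmax L ≤ d x z := by
        have h2 : d y z ≤ max (d y x) (d x z) := hultra y z x
        rw [← hIH] at hlt ⊢
        rw [hsymm y x] at h2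
        rcases max_cases (d x y) (d x z) with ⟨he, _⟩ | ⟨he, _⟩
        · rw [he] at h2; exact absurd (lt_of_le_of_lt h2 hlt) (lt_irrefl _)
        · rw [he] at h2; exact h2
      linarith
    · -- equal: contradiction with count
      exfalso
      rw [fmax_cons, heq, max_self] at hcount
      rw [List.count_cons_self] at hcount
      have : 0 < L.count (fmax L) := List.count_pos_iff.2 hLmem
      omega
    · -- d x y is the unique max
      have hfm : max (d x y) (fmax L) = d x y := max_eq_left hgt.le
      rw [fmax_cons, hfm]
      have hyz : d y z ≤ fmax L := dist_le_fmax d hnonneg hultra m' y z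
      have hge : d x y ≤ d x z := by
        have h2 : d x y ≤ max (d x z) (d z y) := hultra x y z
        rw [hsymm z y] at h2
        rcases max_cases (d x z) (d y z) with ⟨he, _⟩ | ⟨he, hle2⟩
        · rw [he] at h2; exact h2
        · rw [he] at h2; linarith
      have hle : d x z ≤ d x y := by
        have h := dist_le_fmax d hnonneg hultra (y :: m') x z
        rw [show x :: (y :: m') ++ [z] = x :: y :: m' ++ [z] from rfl, hfull, fmax_cons, hfm] at h
        exact h
      linarith

omit hnonneg hsymm hultra

lemma E_append : ∀ (p : List X) (y : X) (q : List X),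
    E d (p ++ y :: q) = E d (p ++ [y]) ++ E d (y :: q)
  | [], y, q => by simp
  | [a], y, q => by simp
  | a :: b :: p', y, q => by
    have := E_append (b :: p') y q
    simp only [List.cons_append, E_cons] at this ⊢
    rw [this]

lemma E_join : ∀ (q : List X) (hq : q ≠ []) (c : X),
    E d (q ++ [c]) = E d q ++ [d (q.getLast hq) c]
  | [a], _, c => by simp
  | a :: b :: q', _, c => by
    have := E_join (b :: q') (by simp) c
    simp only [List.cons_append, E_cons] at this ⊢
    rw [this]
    simp [List.getLast_cons]

lemma zip_rotate_aux : ∀ (t : List X) (a c : X),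
    ((a :: t).zip (t ++ [c])).map (fun p => d p.1 p.2)
      = E d (a :: t) ++ [d ((a :: t).getLast (by simp)) c]
  | [], a, c => by simp [E]
  | b :: t', a, c => by
    have := zip_rotate_aux t' b c
    simp only [List.cons_append, List.zip_cons_cons, List.map_cons] at this ⊢
    rw [this]
    simp [List.getLast_cons]

lemma zip_rotate (l : List X) (hne : l ≠ []) :
    (l.zip (l.rotate 1)).map (fun p => d p.1 p.2)
      = E d l ++ [d (l.getLast hne) (l.head hne)] := by
  match l with
  | a :: t =>
    have hrot : (a :: t).rotate 1 = t ++ [a] := by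
      simp [List.rotate_cons_succ]
    rw [hrot, zip_rotate_aux]
    simp

lemma E_mem_pair : ∀ (l : List X), l.Nodup → ∀ r ∈ E d l,
    ∃ x ∈ l, ∃ y ∈ l, x ≠ y ∧ r = d x y
  | [], _, r, hr => by simp at hr
  | [a], _, r, hr => by simp at hr
  | a :: b :: t, hnd, r, hr => by
    rw [E_cons, List.mem_cons] at hr
    rcases hr with rfl | hr
    · refine ⟨a, by simp, b, by simp, ?_, rfl⟩
      intro h
      subst h
      simp at hnd
    · obtain ⟨x, hx, y, hy, hxy, hrxy⟩ := E_mem_pair (b :: t) (hnd.of_cons) r hr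
      exact ⟨x, List.mem_cons_of_mem a hx, y, List.mem_cons_of_mem a hy, hxy, hrxy⟩

lemma length_filter_count (M : ℝ) (L : List ℝ) :
    L.length = L.count M + (L.filter (· ≠ M)).length := by
  induction L with
  | nil => simp
  | cons a t ih =>
    by_cases h : a = M
    · subst h
      rw [List.count_cons_self, List.filter_cons_of_neg (by simp)]
      rw [List.length_cons, ih]
      omega
    · rw [List.count_cons_of_ne h,
        List.filter_cons_of_pos (by simp [h])]
      rw [List.length_cons, List.length_cons, ih]
      omega

variable [DecidableEq X]

/-- spectrum of distances over a finite set of points -/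
noncomputable def sp (s : Finset X) : Finset ℝ := (s ×ˢ s).image fun p => d p.1 p.2

lemma mem_sp {s : Finset X} {x y : X} (hx : x ∈ s) (hy : y ∈ s) : d x y ∈ sp d s :=
  Finset.mem_image.2 ⟨(x, y), Finset.mem_product.2 ⟨hx, hy⟩, rfl⟩

lemma sp_mono {s t : Finset X} (h : s ⊆ t) : sp d s ⊆ sp d t := by
  apply Finset.image_subset_image
  exact Finset.product_subset_product h h

include hzero in
lemma zero_mem_sp {s : Finset X} (hs : s.Nonempty) : (0 : ℝ) ∈ sp d s := by
  obtain ⟨a, ha⟩ := hs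
  have : d a a = 0 := (hzero a a).2 rfl
  rw [← this]; exact mem_sp d ha ha

include hnonneg hsymm hzero hultra in
lemma split (s : Finset X) (h2 : 2 ≤ s.card) :
    ∃ (A B : Finset X) (M : ℝ),
      A ∪ B = s ∧ Disjoint A B ∧ A.Nonempty ∧ B.Nonempty ∧
      (0 : ℝ) < M ∧
      (∀ x ∈ A, ∀ y ∈ B, d x y = M) ∧
      (∀ x ∈ A, ∀ x' ∈ A, d x x' < M) ∧
      sp d s = (sp d A ∪ sp d B) ∪ {M} ∧
      M ∉ sp d A := by
  have hsne : s.Nonempty := Finset.card_pos.1 (by omega)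
  have hspne : (sp d s).Nonempty := ⟨0, zero_mem_sp d hzero hsne⟩
  set M := (sp d s).max' hspne with hM
  have hMmem : M ∈ sp d s := (sp d s).max'_mem hspne
  have hle : ∀ x ∈ s, ∀ y ∈ s, d x y ≤ M := fun x hx y hy =>
    (sp d s).le_max' _ (mem_sp d hx hy)
  obtain ⟨p, hp, hpd⟩ := Finset.mem_image.1 hMmem
  obtain ⟨hp1, hp2⟩ := Finset.mem_product.1 hp
  obtain ⟨u, hu, v, hv, huv⟩ := Finset.one_lt_card.1 (by omega : 1 < s.card)
  have hMpos : 0 < M := by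
    have h1 : d u v ≤ M := hle u hu v hv
    have h2 : 0 < d u v :=
      lt_of_le_of_ne (hnonneg u v) (fun h => huv ((hzero u v).1 h.symm))
    linarith
  set a := p.1 with ha
  set b := p.2 with hb
  have hab : d a b = M := hpd
  set A := s.filter (fun x => d x a < M) with hA
  set B := s.filter (fun x => ¬ (d x a < M)) with hB
  have hUnion : A ∪ B = s := Finset.filter_union_filter_not_eq _ s
  have hDisj : Disjoint A B := Finset.disjoint_filter_filter_not s s _
  have haA : a ∈ A := by
    rw [hA, Finset.mem_filter]
    exact ⟨hp1, by rw [(hzero a a).2 rfl]; exact hMpos⟩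
  have hbB : b ∈ B := by
    rw [hB, Finset.mem_filter]
    refine ⟨hp2, ?_⟩
    rw [hsymm b a, hab]
    simp
  have hBa : ∀ y ∈ B, d y a = M := by
    intro y hy
    rw [hB, Finset.mem_filter] at hy
    exact le_antisymm (hle y hy.1 a hp1) (not_lt.1 hy.2)
  have hcross : ∀ x ∈ A, ∀ y ∈ B, d x y = M := by
    intro x hx y hy
    have hxs : x ∈ s := (Finset.mem_filter.1 hx).1
    have hys : y ∈ s := (Finset.mem_filter.1 hy).1
    have hxa : d x a < M := (Finset.mem_filter.1 hx).2
    refine le_antisymm (hle x hxs y hys) ?_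
    have h1 : d y a ≤ max (d y x) (d x a) := hultra y a x
    rw [hBa y hy] at h1
    rcases max_cases (d y x) (d x a) with ⟨he, _⟩ | ⟨he, _⟩
    · rw [he] at h1; rw [hsymm x y]; exact h1
    · rw [he] at h1; linarith
  have hwithin : ∀ x ∈ A, ∀ x' ∈ A, d x x' < M := by
    intro x hx x' hx'
    have hxa : d x a < M := (Finset.mem_filter.1 hx).2
    have hx'a : d x' a < M := (Finset.mem_filter.1 hx').2
    calc d x x' ≤ max (d x a) (d a x') := hultra x x' a
    _ < M := by rw [hsymm a x']; exact max_lt hxa hx'a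
  have hspeq : sp d s = (sp d A ∪ sp d B) ∪ {M} := by
    apply Finset.Subset.antisymm
    · intro r hr
      obtain ⟨q, hq, hqd⟩ := Finset.mem_image.1 hr
      obtain ⟨hq1, hq2⟩ := Finset.mem_product.1 hq
      rw [← hUnion, Finset.mem_union] at hq1 hq2
      simp only [Finset.mem_union, Finset.mem_singleton]
      rcases hq1 with h1 | h1 <;> rcases hq2 with h2 | h2
      · exact Or.inl (Or.inl (hqd ▸ mem_sp d h1 h2))
      · exact Or.inr (by rw [← hqd, hcross _ h1 _ h2])
      · exact Or.inr (by rw [← hqd, hsymm, hcross _ h2 _ h1])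
      · exact Or.inl (Or.inr (hqd ▸ mem_sp d h1 h2))
    · intro r hr
      simp only [Finset.mem_union, Finset.mem_singleton] at hr
      rcases hr with (h | h) | rfl
      · exact sp_mono d (hUnion ▸ Finset.subset_union_left) h
      · exact sp_mono d (hUnion ▸ Finset.subset_union_right) h
      · exact hMmem
  have hMnotinA : M ∉ sp d A := by
    intro hMA
    obtain ⟨q, hq, hqd⟩ := Finset.mem_image.1 hMA
    obtain ⟨hq1, hq2⟩ := Finset.mem_product.1 hq
    have := hwithin _ hq1 _ hq2
    rw [hqd] at this
    exact lt_irrefl _ this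
  exact ⟨A, B, M, hUnion, hDisj, ⟨a, haA⟩, ⟨b, hbB⟩, hMpos, hcross, hwithin, hspeq, hMnotinA⟩

include hnonneg hsymm hzero hultra in
lemma gomory_hu (s : Finset X) : (sp d s).card ≤ s.card := by
  induction s using Finset.strongInduction with
  | _ s ih =>
    rcases le_or_gt s.card 1 with hc | hc
    · rcases s.eq_empty_or_nonempty with rfl | ⟨a, ha⟩
      · simp [sp]
      · have hs1 : s = {a} :=
          Finset.eq_singleton_iff_unique_mem.2 ⟨ha, fun b hb => Finset.card_le_one.1 hc b hb a ha⟩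
        subst hs1
        have h1 : sp d {a} = {d a a} := by simp [sp]
        rw [h1]; simp
    · obtain ⟨A, B, M, hUnion, hDisj, hAne, hBne, hMpos, hcross, hwithin, hspeq, hMA⟩ :=
        split d hnonneg hsymm hzero hultra s (by omega)
      have hAsub : A ⊂ s := by
        obtain ⟨b, hb⟩ := hBne
        refine Finset.ssubset_iff_of_subset (hUnion ▸ Finset.subset_union_left) |>.2 ?_
        exact ⟨b, hUnion ▸ Finset.mem_union_right _ hb, fun hbA => (Finset.disjoint_left.1 hDisj) hbA hb⟩
      have hBsub : B ⊂ s := by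
        obtain ⟨a, ha⟩ := hAne
        refine Finset.ssubset_iff_of_subset (hUnion ▸ Finset.subset_union_right) |>.2 ?_
        exact ⟨a, hUnion ▸ Finset.mem_union_left _ ha, fun haB => (Finset.disjoint_left.1 hDisj) ha haB⟩
      have hA := ih A hAsub
      have hB := ih B hBsub
      have hzmem : (0:ℝ) ∈ sp d A ∩ sp d B :=
        Finset.mem_inter.2 ⟨zero_mem_sp d hzero hAne, zero_mem_sp d hzero hBne⟩
      have hinter : 1 ≤ (sp d A ∩ sp d B).card := Finset.card_pos.2 ⟨0, hzmem⟩
      have hcui : (sp d A ∪ sp d B).card + (sp d A ∩ sp d B).card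
          = (sp d A).card + (sp d B).card := Finset.card_union_add_card_inter _ _
      have hcardAB : A.card + B.card = s.card := by
        rw [← Finset.card_union_of_disjoint hDisj, hUnion]
      have hsp : (sp d s).card ≤ (sp d A ∪ sp d B).card + 1 := by
        rw [hspeq]
        exact le_trans (Finset.card_union_le _ _) (by simp)
      omega

include hnonneg hsymm hzero hultra in
lemma ext_path : ∀ (s : Finset X), s.Nonempty → (sp d s).card = s.card →
    ∃ l : List X, l ≠ [] ∧ l.Nodup ∧ l.toFinset = s ∧ (E d l).Nodup := by
  intro s
  induction s using Finset.strongInduction with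
  | _ s ih =>
    intro hne hcard
    rcases le_or_gt s.card 1 with hc | hc
    · obtain ⟨a, ha⟩ := hne
      have hs1 : s = {a} :=
        Finset.eq_singleton_iff_unique_mem.2 ⟨ha, fun b hb => Finset.card_le_one.1 hc b hb a ha⟩
      subst hs1
      exact ⟨[a], by simp, by simp, by simp, by simp⟩
    · obtain ⟨A, B, M, hUnion, hDisj, hAne, hBne, hMpos, hcross, hwithin, hspeq, hMA⟩ :=
        split d hnonneg hsymm hzero hultra s (by omega)
      have hAsub : A ⊂ s := by
        obtain ⟨b, hb⟩ := hBne
        refine Finset.ssubset_iff_of_subset (hUnion ▸ Finset.subset_union_left) |>.2 ?_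
        exact ⟨b, hUnion ▸ Finset.mem_union_right _ hb,
          fun hbA => (Finset.disjoint_left.1 hDisj) hbA hb⟩
      have hBsub : B ⊂ s := by
        obtain ⟨a, ha⟩ := hAne
        refine Finset.ssubset_iff_of_subset (hUnion ▸ Finset.subset_union_right) |>.2 ?_
        exact ⟨a, hUnion ▸ Finset.mem_union_left _ ha,
          fun haB => (Finset.disjoint_left.1 hDisj) ha haB⟩
      have ghA := gomory_hu d hnonneg hsymm hzero hultra A
      have ghB := gomory_hu d hnonneg hsymm hzero hultra B
      have hzmem : (0:ℝ) ∈ sp d A ∩ sp d B :=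
        Finset.mem_inter.2 ⟨zero_mem_sp d hzero hAne, zero_mem_sp d hzero hBne⟩
      have hinter : 1 ≤ (sp d A ∩ sp d B).card := Finset.card_pos.2 ⟨0, hzmem⟩
      have hcui : (sp d A ∪ sp d B).card + (sp d A ∩ sp d B).card
          = (sp d A).card + (sp d B).card := Finset.card_union_add_card_inter _ _
      have hcardAB : A.card + B.card = s.card := by
        rw [← Finset.card_union_of_disjoint hDisj, hUnion]
      have hsp_le : (sp d s).card ≤ (sp d A ∪ sp d B).card + 1 := by
        rw [hspeq]
        exact le_trans (Finset.card_union_le _ _) (by simp)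
      -- extremality forces equalities
      have hMnotun : M ∉ sp d A ∪ sp d B := by
        intro hMun
        have habs : sp d s = sp d A ∪ sp d B := by
          rw [hspeq]
          exact Finset.union_eq_left.2 (Finset.singleton_subset_iff.2 hMun)
        have h1 : (sp d A ∪ sp d B).card ≤ A.card + B.card - 1 := by omega
        rw [habs] at hcard
        omega
      have hspcard : (sp d s).card = (sp d A ∪ sp d B).card + 1 := by
        rw [hspeq]
        rw [Finset.union_comm]
        rw [show ({M} : Finset ℝ) ∪ (sp d A ∪ sp d B) = insert M (sp d A ∪ sp d B) by
          exact (Finset.insert_eq _ _).symm]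
        rw [Finset.card_insert_of_notMem hMnotun]
      have hcA : (sp d A).card = A.card := by omega
      have hcB : (sp d B).card = B.card := by omega
      have hintercard : (sp d A ∩ sp d B).card = 1 := by omega
      have hinterzero : sp d A ∩ sp d B = {0} := by
        obtain ⟨c, hceq⟩ := Finset.card_eq_one.1 hintercard
        rw [hceq] at hzmem ⊢
        rw [Finset.mem_singleton.1 hzmem]
      obtain ⟨lA, hlAne, hlAnd, hlAfin, hlAE⟩ := ih A hAsub hAne hcA
      obtain ⟨lB, hlBne, hlBnd, hlBfin, hlBE⟩ := ih B hBsub hBne hcB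
      obtain ⟨bh, bt, rfl⟩ := List.exists_cons_of_ne_nil hlBne
      have hmemA : ∀ x ∈ lA, x ∈ A := fun x hx => hlAfin ▸ List.mem_toFinset.2 hx
      have hmemB : ∀ x ∈ bh :: bt, x ∈ B := fun x hx => hlBfin ▸ List.mem_toFinset.2 hx
      have hglA : lA.getLast hlAne ∈ A := hmemA _ (List.getLast_mem hlAne)
      have hbhB : bh ∈ B := hmemB bh (by simp)
      have hjoint : d (lA.getLast hlAne) bh = M := hcross _ hglA _ hbhB
      have hEA : ∀ r ∈ E d lA, r ∈ sp d A ∧ r ≠ 0 := by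
        intro r hr
        obtain ⟨x, hx, y, hy, hxy, rfl⟩ := E_mem_pair d lA hlAnd r hr
        exact ⟨mem_sp d (hmemA x hx) (hmemA y hy), fun h0 => hxy ((hzero x y).1 h0)⟩
      have hEB : ∀ r ∈ E d (bh :: bt), r ∈ sp d B ∧ r ≠ 0 := by
        intro r hr
        obtain ⟨x, hx, y, hy, hxy, rfl⟩ := E_mem_pair d _ hlBnd r hr
        exact ⟨mem_sp d (hmemB x hx) (hmemB y hy), fun h0 => hxy ((hzero x y).1 h0)⟩
      refine ⟨lA ++ bh :: bt, by simp [hlAne], ?_, ?_, ?_⟩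
      · rw [List.nodup_append]
        exact ⟨hlAnd, hlBnd, fun x hx y hy hxy =>
          (Finset.disjoint_left.1 hDisj) (hmemA x hx) (hmemB x (by subst hxy; exact hy))⟩
      · rw [List.toFinset_append, hlAfin, hlBfin, hUnion]
      · rw [E_append d lA bh bt, E_join d lA hlAne bh, hjoint]
        rw [List.append_assoc, List.singleton_append, List.nodup_append]
        refine ⟨hlAE, ?_, ?_⟩
        · rw [List.nodup_cons]
          refine ⟨fun hMB => ?_, hlBE⟩
          exact hMnotun (Finset.mem_union_right _ (hEB M hMB).1)
        · intro r hr
          obtain ⟨hrA, hr0⟩ := hEA r hr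
          intro b hb hrb; subst hrb; revert hb
          rw [List.mem_cons]
          rintro (rfl | hrB)
          · exact hMnotun (Finset.mem_union_left _ hrA)
          · obtain ⟨hrB', _⟩ := hEB r hrB
            have : r ∈ sp d A ∩ sp d B := Finset.mem_inter.2 ⟨hrA, hrB'⟩
            rw [hinterzero, Finset.mem_singleton] at this
            exact hr0 this

omit [DecidableEq X]

lemma perm_rot3 (P Q R : List ℝ) : (P ++ Q ++ R).Perm (Q ++ (R ++ P)) := by
  have h : (P ++ (Q ++ R)).Perm ((Q ++ R) ++ P) := List.perm_append_comm
  simpa [List.append_assoc] using h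

lemma arc_perm (u : List X) (a : X) (v : List X) (b : X) (w : List X) :
    (((u ++ a :: v ++ b :: w).zip ((u ++ a :: v ++ b :: w).rotate 1)).map
        (fun p => d p.1 p.2)).Perm
      (E d (a :: v ++ [b]) ++ E d (b :: (w ++ u) ++ [a])) := by
  have hlne : (u ++ a :: v ++ b :: w) ≠ [] := by simp
  rw [zip_rotate d _ hlne]
  have hlast : (u ++ a :: v ++ b :: w).getLast hlne
      = (b :: w).getLast (List.cons_ne_nil b w) := by
    have h1 : ((u ++ a :: v) ++ b :: w).getLast? = (b :: w).getLast? :=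
      List.getLast?_append_of_ne_nil _ (by simp)
    rw [List.getLast?_eq_getLast hlne,
      List.getLast?_eq_getLast (List.cons_ne_nil b w)] at h1
    exact Option.some_injective _ h1
  rw [hlast]
  have h2 := E_append d (a :: v) b w
  simp only [List.cons_append] at h2
  cases u with
  | nil =>
    have hhead : ((([] : List X) ++ a :: v ++ b :: w)).head hlne = a := rfl
    rw [hhead]
    have harc2 := E_join d (b :: w) (List.cons_ne_nil b w) a
    simp only [List.nil_append, List.append_nil, List.cons_append,
      List.append_assoc] at harc2 h2 ⊢
    rw [h2, harc2]
    simp only [List.append_assoc]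
    exact List.Perm.refl _
  | cons c u' =>
    have hhead : (((c :: u') ++ a :: v ++ b :: w)).head hlne = c := rfl
    rw [hhead]
    have harc2 := E_join d (b :: w) (List.cons_ne_nil b w) c
    have h1 := E_append d (c :: u') a (v ++ b :: w)
    have h3 := E_append d (b :: w) c (u' ++ [a])
    simp only [List.cons_append, List.append_assoc] at h1 h2 h3 harc2 ⊢
    rw [h1, h2, h3, harc2]
    have hperm := perm_rot3 (E d (c :: (u' ++ [a])))
      (E d (a :: (v ++ [b])))
      (E d (b :: w) ++ [d ((b :: w).getLast (List.cons_ne_nil b w)) c])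
    simpa [List.append_assoc] using hperm

include hnonneg hsymm hultra in
lemma dist_mem_of_nodup (m : List X) (x z : X) (hnd : (E d (x :: m ++ [z])).Nodup) :
    d x z ∈ E d (x :: m ++ [z]) := by
  have hlen : (E d (x :: m ++ [z])).length = m.length + 1 := by
    rw [E_length]; simp
  have hne : E d (x :: m ++ [z]) ≠ [] := by
    intro h; rw [h] at hlen; simp at hlen
  have hmem := fmax_mem hne (E_nonneg d hnonneg _)
  have heq := dist_eq_fmax d hnonneg hsymm hultra m x z (List.count_eq_one_of_mem hnd hmem)
  rw [heq]; exact hmem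

include hnonneg hsymm hultra in
lemma dist_eq_max_of_count_one (m : List X) (x z : X) (M : ℝ)
    (hM : 0 ≤ M)
    (hbound : ∀ r ∈ E d (x :: m ++ [z]), r ≤ M)
    (hcount : (E d (x :: m ++ [z])).count M = 1) :
    d x z = M := by
  have hmemM : M ∈ E d (x :: m ++ [z]) := List.count_pos_iff.1 (by omega)
  have heq : fmax (E d (x :: m ++ [z])) = M :=
    le_antisymm (fmax_le hbound hM) (le_fmax hmemM)
  rw [dist_eq_fmax d hnonneg hsymm hultra m x z (by rw [heq]; exact hcount), heq]

include hnonneg hsymm hultra in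
lemma arc_main (u : List X) (a : X) (v : List X) (b : X) (w : List X) (M : ℝ)
    (hbound : ∀ r ∈ ((u ++ a :: v ++ b :: w).zip
        ((u ++ a :: v ++ b :: w).rotate 1)).map (fun p => d p.1 p.2), r ≤ M)
    (hcount : (((u ++ a :: v ++ b :: w).zip
        ((u ++ a :: v ++ b :: w).rotate 1)).map (fun p => d p.1 p.2)).count M = 2)
    (hfilter : ((((u ++ a :: v ++ b :: w).zip
        ((u ++ a :: v ++ b :: w).rotate 1)).map (fun p => d p.1 p.2)).filter
          (· ≠ M)).Nodup) :
    d a b ∈ ((u ++ a :: v ++ b :: w).zip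
        ((u ++ a :: v ++ b :: w).rotate 1)).map (fun p => d p.1 p.2) := by
  set C := ((u ++ a :: v ++ b :: w).zip
      ((u ++ a :: v ++ b :: w).rotate 1)).map (fun p => d p.1 p.2) with hC
  have hperm := arc_perm d u a v b w
  rw [← hC] at hperm
  set A1 := E d (a :: v ++ [b]) with hA1
  set A2 := E d (b :: (w ++ u) ++ [a]) with hA2
  have hcnt : A1.count M + A2.count M = 2 := by
    rw [← List.count_append, ← hperm.count_eq]; exact hcount
  have hsub1 : ∀ r ∈ A1, r ∈ C := fun r hr => hperm.mem_iff.2 (List.mem_append_left _ hr)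
  have hsub2 : ∀ r ∈ A2, r ∈ C := fun r hr => hperm.mem_iff.2 (List.mem_append_right _ hr)
  have hCnonneg : ∀ r ∈ C, 0 ≤ r := by
    intro r hr
    rw [hC] at hr
    obtain ⟨p, _, rfl⟩ := List.mem_map.1 hr
    exact hnonneg _ _
  have hMC : M ∈ C := List.count_pos_iff.1 (by omega)
  have hMnn : 0 ≤ M := hCnonneg M hMC
  have hfilterA : ((A1 ++ A2).filter (· ≠ M)).Nodup := ((hperm.filter _).nodup_iff).1 hfilter
  rw [List.filter_append, List.nodup_append] at hfilterA
  by_cases hc0 : A1.count M = 0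
  · have hnotmem : M ∉ A1 := List.count_eq_zero.1 hc0
    have hfeq : A1.filter (· ≠ M) = A1 :=
      List.filter_eq_self.2 (fun r hr => by
        simp only [ne_eq, decide_eq_true_eq]
        intro hrM; exact hnotmem (hrM ▸ hr))
    have hnd : A1.Nodup := hfeq ▸ hfilterA.1
    exact hsub1 _ (dist_mem_of_nodup d hnonneg hsymm hultra v a b hnd)
  · by_cases hc1 : A1.count M = 1
    · have := dist_eq_max_of_count_one d hnonneg hsymm hultra v a b M hMnn
        (fun r hr => hbound r (hsub1 r hr)) hc1
      rw [this]; exact hMC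
    · have hc2 : A2.count M = 0 := by omega
      have hnotmem : M ∉ A2 := List.count_eq_zero.1 hc2
      have hfeq : A2.filter (· ≠ M) = A2 :=
        List.filter_eq_self.2 (fun r hr => by
          simp only [ne_eq, decide_eq_true_eq]
          intro hrM; exact hnotmem (hrM ▸ hr))
      have hnd : A2.Nodup := hfeq ▸ hfilterA.2.1
      have hdb := dist_mem_of_nodup d hnonneg hsymm hultra (w ++ u) b a hnd
      rw [hsymm a b]
      exact hsub2 _ hdb

lemma decomp (l : List X) (x y : X) (hx : x ∈ l) (hy : y ∈ l) (hxy : x ≠ y) :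
    ∃ u a v b w, l = u ++ a :: v ++ b :: w ∧ ((a = x ∧ b = y) ∨ (a = y ∧ b = x)) := by
  obtain ⟨u, r, rfl⟩ := List.append_of_mem hx
  rcases List.mem_append.1 hy with hyu | hyr
  · obtain ⟨u1, u2, rfl⟩ := List.append_of_mem hyu
    exact ⟨u1, y, u2, x, r, by simp, Or.inr ⟨rfl, rfl⟩⟩
  · rcases List.mem_cons.1 hyr with rfl | hyr'
    · exact absurd rfl hxy
    · obtain ⟨v, w, rfl⟩ := List.append_of_mem hyr'
      exact ⟨u, x, v, y, w, by simp, Or.inl ⟨rfl, rfl⟩⟩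

end CharHam

open CharHam

/-- A finite ultrametric space with at least 3 points is extremal for the
Gomory-Hu inequality iff its complete weighted graph contains a characteristic
Hamiltonian cycle: exactly two of the cyclic consecutive distances attain the
maximum, and the remaining ones are positive and pairwise distinct. -/
theorem extremal_iff_characteristic_hamiltonian_cycle {X : Type*} [Fintype X]
    (d : X → X → ℝ)
    (hcard : 3 ≤ Fintype.card X)
    (hnonneg : ∀ x y, 0 ≤ d x y)
    (hsymm : ∀ x y, d x y = d y x)
    (hzero : ∀ x y, d x y = 0 ↔ x = y)
    (hultra : ∀ x y z, d x y ≤ max (d x z) (d z y)) :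
    (Finset.univ.image (fun p : X × X => d p.1 p.2)).card = Fintype.card X ↔
      ∃ l : List X, l.Nodup ∧ (∀ x : X, x ∈ l) ∧
        ∃ M : ℝ,
          (∀ r ∈ (l.zip (l.rotate 1)).map (fun p => d p.1 p.2), r ≤ M) ∧
          ((l.zip (l.rotate 1)).map (fun p => d p.1 p.2)).count M = 2 ∧
          (((l.zip (l.rotate 1)).map (fun p => d p.1 p.2)).filter (· ≠ M)).Nodup ∧
          (∀ r ∈ ((l.zip (l.rotate 1)).map (fun p => d p.1 p.2)).filter (· ≠ M),
            (0 : ℝ) < r) := by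
  classical
  constructor
  · -- extremal → characteristic Hamiltonian cycle
    intro h
    have hspuniv : sp d (Finset.univ : Finset X)
        = Finset.univ.image (fun p : X × X => d p.1 p.2) := by
      rw [sp, Finset.univ_product_univ]
    have hcard' : (sp d (Finset.univ : Finset X)).card = (Finset.univ : Finset X).card := by
      rw [hspuniv, Finset.card_univ, h]
    have huniv_ne : (Finset.univ : Finset X).Nonempty := by
      have : Nonempty X := Fintype.card_pos_iff.1 (by omega)
      exact Finset.univ_nonempty
    obtain ⟨l, hlne, hlnd, hlfin, hlE⟩ :=
      ext_path d hnonneg hsymm hzero hultra Finset.univ huniv_ne hcard'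
    have hlen : l.length = Fintype.card X := by
      rw [← List.toFinset_card_of_nodup hlnd, hlfin, Finset.card_univ]
    obtain ⟨x, t, rfl⟩ := List.exists_cons_of_ne_nil hlne
    have htne : t ≠ [] := by
      intro h'
      rw [h'] at hlen
      simp at hlen
      omega
    obtain ⟨m, z, htmz⟩ := (List.eq_nil_or_concat t).resolve_left htne
    rw [List.concat_eq_append] at htmz
    subst htmz
    have hne' : x :: (m ++ [z]) ≠ [] := by simp
    set M : ℝ := fmax (E d (x :: (m ++ [z]))) with hM
    have hEne : E d (x :: (m ++ [z])) ≠ [] := by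
      have hl2 : (E d (x :: (m ++ [z]))).length = m.length + 1 := by
        rw [E_length]; simp
      intro h'
      rw [h'] at hl2
      simp at hl2
    have hMmem : M ∈ E d (x :: (m ++ [z])) :=
      fmax_mem hEne (E_nonneg d hnonneg _)
    have hcount1 : (E d (x :: (m ++ [z]))).count M = 1 :=
      List.count_eq_one_of_mem hlE hMmem
    have hdxz : d x z = M :=
      dist_eq_fmax d hnonneg hsymm hultra m x z hcount1
    have hzr := zip_rotate d (x :: (m ++ [z])) hne'
    have hlast : (x :: (m ++ [z])).getLast hne' = z := by
      exact List.getLast_concat (l := x :: m)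
    have hhead : (x :: (m ++ [z])).head hne' = x := rfl
    rw [hlast, hhead, hsymm z x, hdxz] at hzr
    refine ⟨x :: (m ++ [z]), hlnd, fun y => List.mem_toFinset.1 (hlfin ▸ Finset.mem_univ y),
      M, ?_, ?_, ?_, ?_⟩
    · intro r hr
      rw [hzr, List.mem_append] at hr
      rcases hr with hr | hr
      · exact le_fmax hr
      · rw [List.mem_singleton.1 hr]
    · rw [hzr, List.count_append, hcount1]
      simp
    · rw [hzr, List.filter_append]
      have : [M].filter (· ≠ M) = [] := by simp
      rw [this, List.append_nil]
      exact hlE.filter _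
    · intro r hr
      rw [hzr, List.filter_append] at hr
      have h2 : [M].filter (· ≠ M) = [] := by simp
      rw [h2, List.append_nil, List.mem_filter] at hr
      obtain ⟨p, hpmem, q, hqmem, hpq, rfl⟩ :=
        E_mem_pair d _ hlnd _ hr.1
      exact lt_of_le_of_ne (hnonneg p q) (fun h0 => hpq ((hzero p q).1 h0.symm))
  · -- characteristic Hamiltonian cycle → extremal
    rintro ⟨l, hlnd, hcov, M, hbound, hcount, hfnd, hpos⟩
    have hfin : l.toFinset = Finset.univ :=
      Finset.eq_univ_iff_forall.2 (fun x => List.mem_toFinset.2 (hcov x))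
    have hlen : l.length = Fintype.card X := by
      rw [← List.toFinset_card_of_nodup hlnd, hfin, Finset.card_univ]
    have hClen : ((l.zip (l.rotate 1)).map (fun p => d p.1 p.2)).length = l.length := by
      simp [List.length_zip]
    have hMC : M ∈ (l.zip (l.rotate 1)).map (fun p => d p.1 p.2) :=
      List.count_pos_iff.1 (by omega)
    have hCnonneg : ∀ r ∈ (l.zip (l.rotate 1)).map (fun p => d p.1 p.2), 0 ≤ r := by
      intro r hr
      obtain ⟨p, _, rfl⟩ := List.mem_map.1 hr
      exact hnonneg _ _
    have hMpos : 0 < M := by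
      rcases lt_or_eq_of_le (hCnonneg M hMC) with h | h
      · exact h
      · exfalso
        have hallM : ∀ r ∈ (l.zip (l.rotate 1)).map (fun p => d p.1 p.2), M = r := by
          intro r hr
          have h1 := hCnonneg r hr
          have h2 := hbound r hr
          linarith
        have := List.count_eq_length.2 hallM
        omega
    have hCpos : ∀ r ∈ (l.zip (l.rotate 1)).map (fun p => d p.1 p.2), 0 < r := by
      intro r hr
      by_cases hrM : r = M
      · exact hrM ▸ hMpos
      · exact hpos r (List.mem_filter.2 ⟨hr, by simpa using hrM⟩)
    have himg : Finset.univ.image (fun p : X × X => d p.1 p.2)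
        = insert (0 : ℝ) ((l.zip (l.rotate 1)).map (fun p => d p.1 p.2)).toFinset := by
      apply Finset.Subset.antisymm
      · intro r hr
        obtain ⟨p, _, rfl⟩ := Finset.mem_image.1 hr
        by_cases hpq : p.1 = p.2
        · rw [hpq, (hzero _ _).2 rfl]
          exact Finset.mem_insert_self _ _
        · obtain ⟨u, a, v, b, w, heq, hab⟩ :=
            decomp l p.1 p.2 (hcov p.1) (hcov p.2) hpq
          subst heq
          have hmem := arc_main d hnonneg hsymm hultra u a v b w M hbound hcount hfnd
          refine Finset.mem_insert_of_mem (List.mem_toFinset.2 ?_)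
          rcases hab with ⟨rfl, rfl⟩ | ⟨rfl, rfl⟩
          · exact hmem
          · rw [hsymm p.2 p.1] at hmem
            exact hmem
      · intro r hr
        rcases Finset.mem_insert.1 hr with rfl | hr'
        · have : Nonempty X := Fintype.card_pos_iff.1 (by omega)
          obtain ⟨x⟩ := this
          exact Finset.mem_image.2 ⟨(x, x), Finset.mem_univ _, (hzero x x).2 rfl⟩
        · obtain ⟨p, _, rfl⟩ := List.mem_map.1 (List.mem_toFinset.1 hr')
          exact Finset.mem_image.2 ⟨p, Finset.mem_univ _, rfl⟩
    rw [himg]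
    have h0 : (0 : ℝ) ∉ ((l.zip (l.rotate 1)).map (fun p => d p.1 p.2)).toFinset := by
      intro h0'
      exact absurd (hCpos 0 (List.mem_toFinset.1 h0')) (lt_irrefl 0)
    rw [Finset.card_insert_of_notMem h0]
    have hCto : ((l.zip (l.rotate 1)).map (fun p => d p.1 p.2)).toFinset
        = insert M (((l.zip (l.rotate 1)).map (fun p => d p.1 p.2)).filter (· ≠ M)).toFinset := by
      ext r
      simp only [List.mem_toFinset, Finset.mem_insert, List.mem_filter]
      constructor
      · intro hr
        by_cases hrM : r = M
        · exact Or.inl hrM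
        · exact Or.inr ⟨hr, by simpa using hrM⟩
      · rintro (rfl | ⟨hr, _⟩)
        · exact hMC
        · exact hr
    rw [hCto]
    have hMnotin : M ∉ (((l.zip (l.rotate 1)).map (fun p => d p.1 p.2)).filter (· ≠ M)).toFinset := by
      simp only [List.mem_toFinset, List.mem_filter]
      rintro ⟨-, hne⟩
      simp at hne
    rw [Finset.card_insert_of_notMem hMnotin]
    rw [List.toFinset_card_of_nodup hfnd]
    have hflen := length_filter_count M ((l.zip (l.rotate 1)).map (fun p => d p.1 p.2))
    omega
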